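/- Let K₀ ⊂ U(5) be the set of block-diagonal matrices diag(A, B, c) with A, B ∈ SU(2) and c a complex number of modulus one, and let g ∈ U(5) be the matrix determined by ge₁ = e₃, ge₂ = −e₄, ge₃ = e₁, ge₄ = e₂, ge₅ = e₅. Then (i) the subspace of w ∈ ⋀²ℂ⁵ satisfying (⋀²h)w = w for all h ∈ K₀ equals the 2-dimensional span of e₁∧e₂ and e₃∧e₄; (ii) (⋀²g)(e₁∧e₂) = −e₃∧e₄ and (⋀²g)(e₃∧e₄) = e₁∧e₂; consequently the subspace of w ∈ ⋀²ℂ⁵ fixed by all of K₀ and by ⋀²g is {0}. -/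

import Mathlib

noncomputable section

abbrev Mat2 : Type := Matrix (Fin 2) (Fin 2) ℂ

/-- The special unitary group SU(2), as a set of matrices. -/
def SU2 : Set Mat2 := {A | A * A.conjTranspose = 1 ∧ A.det = 1}

/-- The block-diagonal matrix diag(A, B, c) ∈ U(5). -/
def bd5 (A B : Mat2) (c : ℂ) : Matrix (Fin 5) (Fin 5) ℂ :=
  !![A 0 0, A 0 1, 0, 0, 0;
     A 1 0, A 1 1, 0, 0, 0;
     0, 0, B 0 0, B 0 1, 0;
     0, 0, B 1 0, B 1 1, 0;
     0, 0, 0, 0, c]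

/-- The ℤ₄-generator g ∈ U(5): ge₁ = e₃, ge₂ = −e₄, ge₃ = e₁, ge₄ = e₂, ge₅ = e₅. -/
def g5 : Matrix (Fin 5) (Fin 5) ℂ :=
  !![0, 0, 1, 0, 0;
     0, 0, 0, 1, 0;
     1, 0, 0, 0, 0;
     0, -1, 0, 0, 0;
     0, 0, 0, 0, 1]

abbrev EA : Type := ExteriorAlgebra ℂ (Fin 5 → ℂ)

/-- The standard basis of ℂ⁵. -/
def eV (i : Fin 5) : Fin 5 → ℂ := Pi.single i 1

/-- The wedge x∧y ∈ ⋀²ℂ⁵ ⊂ ⋀ℂ⁵. -/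
def wedge (x y : Fin 5 → ℂ) : EA :=
  ExteriorAlgebra.ι ℂ x * ExteriorAlgebra.ι ℂ y

/-- The induced map ⋀h on the exterior algebra of ℂ⁵. -/
def extAct (h : Matrix (Fin 5) (Fin 5) ℂ) : EA →ₐ[ℂ] EA :=
  ExteriorAlgebra.map h.mulVecLin

/-! ### Auxiliary machinery -/

set_option maxHeartbeats 2000000

/-- Coordinate functionals on ⋀²ℂ⁵ via `liftAlternating`. -/
def phi (i j : Fin 5) : EA →ₗ[ℂ] ℂ :=
  ExteriorAlgebra.liftAlternating
    (Function.update (fun _ => 0) 2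
      (Matrix.detRowAlternating.compLinearMap (LinearMap.funLeft ℂ ℂ ![i, j])))

lemma wedge_eq_iMulti (x y : Fin 5 → ℂ) : wedge x y = ExteriorAlgebra.ιMulti ℂ 2 ![x, y] := by
  simp [wedge, ExteriorAlgebra.ιMulti_apply, List.ofFn_succ]

lemma phi_wedge (i j : Fin 5) (x y : Fin 5 → ℂ) :
    phi i j (wedge x y) = x i * y j - x j * y i := by
  rw [wedge_eq_iMulti, phi, ExteriorAlgebra.liftAlternating_apply_ιMulti,
    Function.update_self, AlternatingMap.compLinearMap_apply]
  rw [show (fun i_1 => (LinearMap.funLeft ℂ ℂ ![i, j]) (![x, y] i_1))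
      = Matrix.of ![![x i, x j], ![y i, y j]] by
    funext a b; fin_cases a <;> fin_cases b <;> simp [LinearMap.funLeft]]
  rw [show Matrix.detRowAlternating (Matrix.of ![![x i, x j], ![y i, y j]])
      = (Matrix.of ![![x i, x j], ![y i, y j]]).det from rfl]
  rw [Matrix.det_fin_two]; simp

lemma wedge_add_left (x x' y : Fin 5 → ℂ) : wedge (x + x') y = wedge x y + wedge x' y := by
  simp [wedge, map_add, add_mul]
lemma wedge_add_right (x y y' : Fin 5 → ℂ) : wedge x (y + y') = wedge x y + wedge x y' := by
  simp [wedge, map_add, mul_add]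
lemma wedge_smul_left (c : ℂ) (x y : Fin 5 → ℂ) : wedge (c • x) y = c • wedge x y := by
  simp [wedge, map_smul, smul_mul_assoc]
lemma wedge_smul_right (c : ℂ) (x y : Fin 5 → ℂ) : wedge x (c • y) = c • wedge x y := by
  simp [wedge, map_smul, mul_smul_comm]
lemma wedge_self (x : Fin 5 → ℂ) : wedge x x = 0 := ExteriorAlgebra.ι_sq_zero x
lemma wedge_swap (x y : Fin 5 → ℂ) : wedge y x = - wedge x y := by
  have := ExteriorAlgebra.ι_add_mul_swap (R := ℂ) x y
  unfold wedge; linear_combination (norm := module) this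

lemma vec_expand (x : Fin 5 → ℂ) :
    x = x 0 • eV 0 + x 1 • eV 1 + x 2 • eV 2 + x 3 • eV 3 + x 4 • eV 4 := by
  funext i; fin_cases i <;> simp [eV, Pi.single_apply]

lemma wedge_expand (x y : Fin 5 → ℂ) :
    wedge x y
      = (x 0 * y 1 - x 1 * y 0) • wedge (eV 0) (eV 1)
      + (x 0 * y 2 - x 2 * y 0) • wedge (eV 0) (eV 2)
      + (x 0 * y 3 - x 3 * y 0) • wedge (eV 0) (eV 3)
      + (x 0 * y 4 - x 4 * y 0) • wedge (eV 0) (eV 4)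
      + (x 1 * y 2 - x 2 * y 1) • wedge (eV 1) (eV 2)
      + (x 1 * y 3 - x 3 * y 1) • wedge (eV 1) (eV 3)
      + (x 1 * y 4 - x 4 * y 1) • wedge (eV 1) (eV 4)
      + (x 2 * y 3 - x 3 * y 2) • wedge (eV 2) (eV 3)
      + (x 2 * y 4 - x 4 * y 2) • wedge (eV 2) (eV 4)
      + (x 3 * y 4 - x 4 * y 3) • wedge (eV 3) (eV 4) := by
  conv_lhs => rw [vec_expand x, vec_expand y]
  simp only [wedge_add_left, wedge_add_right, wedge_smul_left, wedge_smul_right, wedge_self,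
    smul_zero]
  rw [show wedge (eV 1) (eV 0) = - wedge (eV 0) (eV 1) from wedge_swap _ _,
    show wedge (eV 2) (eV 0) = - wedge (eV 0) (eV 2) from wedge_swap _ _,
    show wedge (eV 3) (eV 0) = - wedge (eV 0) (eV 3) from wedge_swap _ _,
    show wedge (eV 4) (eV 0) = - wedge (eV 0) (eV 4) from wedge_swap _ _,
    show wedge (eV 2) (eV 1) = - wedge (eV 1) (eV 2) from wedge_swap _ _,
    show wedge (eV 3) (eV 1) = - wedge (eV 1) (eV 3) from wedge_swap _ _,
    show wedge (eV 4) (eV 1) = - wedge (eV 1) (eV 4) from wedge_swap _ _,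
    show wedge (eV 3) (eV 2) = - wedge (eV 2) (eV 3) from wedge_swap _ _,
    show wedge (eV 4) (eV 2) = - wedge (eV 2) (eV 4) from wedge_swap _ _,
    show wedge (eV 4) (eV 3) = - wedge (eV 3) (eV 4) from wedge_swap _ _]
  module

lemma phi_eV (i j k l : Fin 5) :
    phi i j (wedge (eV k) (eV l))
      = (if k = i then 1 else 0) * (if l = j then 1 else 0)
        - (if k = j then 1 else 0) * (if l = i then 1 else 0) := by
  rw [phi_wedge]; simp [eV, Pi.single_apply, eq_comm]

def tenSet : Set EA :=
  {wedge (eV 0) (eV 1), wedge (eV 0) (eV 2), wedge (eV 0) (eV 3), wedge (eV 0) (eV 4),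
   wedge (eV 1) (eV 2), wedge (eV 1) (eV 3), wedge (eV 1) (eV 4),
   wedge (eV 2) (eV 3), wedge (eV 2) (eV 4), wedge (eV 3) (eV 4)}

def Pmap : EA →ₗ[ℂ] EA :=
  (phi 0 1).smulRight (wedge (eV 0) (eV 1)) + (phi 0 2).smulRight (wedge (eV 0) (eV 2))
  + (phi 0 3).smulRight (wedge (eV 0) (eV 3)) + (phi 0 4).smulRight (wedge (eV 0) (eV 4))
  + (phi 1 2).smulRight (wedge (eV 1) (eV 2)) + (phi 1 3).smulRight (wedge (eV 1) (eV 3))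
  + (phi 1 4).smulRight (wedge (eV 1) (eV 4)) + (phi 2 3).smulRight (wedge (eV 2) (eV 3))
  + (phi 2 4).smulRight (wedge (eV 2) (eV 4)) + (phi 3 4).smulRight (wedge (eV 3) (eV 4))

lemma Pmap_apply (w : EA) :
    Pmap w = phi 0 1 w • wedge (eV 0) (eV 1) + phi 0 2 w • wedge (eV 0) (eV 2)
      + phi 0 3 w • wedge (eV 0) (eV 3) + phi 0 4 w • wedge (eV 0) (eV 4)
      + phi 1 2 w • wedge (eV 1) (eV 2) + phi 1 3 w • wedge (eV 1) (eV 3)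
      + phi 1 4 w • wedge (eV 1) (eV 4) + phi 2 3 w • wedge (eV 2) (eV 3)
      + phi 2 4 w • wedge (eV 2) (eV 4) + phi 3 4 w • wedge (eV 3) (eV 4) := rfl

lemma mem_span_ten (w : EA) (hw : w ∈ ⋀[ℂ]^2 (Fin 5 → ℂ)) :
    w ∈ Submodule.span ℂ tenSet := by
  rw [← ExteriorAlgebra.ιMulti_span_fixedDegree] at hw
  induction hw using Submodule.span_induction with
  | mem x hx =>
      obtain ⟨v, rfl⟩ := hx
      have hv : v = ![v 0, v 1] := by funext i; fin_cases i <;> rfl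
      rw [hv, ← wedge_eq_iMulti, wedge_expand]
      repeat' apply Submodule.add_mem
      all_goals
        apply Submodule.smul_mem
        apply Submodule.subset_span
        simp [tenSet]
  | zero => exact Submodule.zero_mem _
  | add x y _ _ ihx ihy => exact Submodule.add_mem _ ihx ihy
  | smul c x _ ih => exact Submodule.smul_mem _ _ ih

lemma Pmap_fix (w : EA) (hw : w ∈ ⋀[ℂ]^2 (Fin 5 → ℂ)) : Pmap w = w := by
  have h := mem_span_ten w hw
  have hle : Submodule.span ℂ tenSet ≤ LinearMap.eqLocus Pmap LinearMap.id := by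
    rw [Submodule.span_le]
    intro z hz
    simp only [tenSet, Set.mem_insert_iff, Set.mem_singleton_iff] at hz
    rcases hz with rfl|rfl|rfl|rfl|rfl|rfl|rfl|rfl|rfl|rfl <;>
      · show Pmap _ = _
        rw [Pmap_apply]
        simp only [phi_eV]
        simp
  exact hle h

lemma expand2 (w : EA) (hw : w ∈ ⋀[ℂ]^2 (Fin 5 → ℂ)) :
    w = phi 0 1 w • wedge (eV 0) (eV 1) + phi 0 2 w • wedge (eV 0) (eV 2)
      + phi 0 3 w • wedge (eV 0) (eV 3) + phi 0 4 w • wedge (eV 0) (eV 4)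
      + phi 1 2 w • wedge (eV 1) (eV 2) + phi 1 3 w • wedge (eV 1) (eV 3)
      + phi 1 4 w • wedge (eV 1) (eV 4) + phi 2 3 w • wedge (eV 2) (eV 3)
      + phi 2 4 w • wedge (eV 2) (eV 4) + phi 3 4 w • wedge (eV 3) (eV 4) := by
  conv_lhs => rw [← Pmap_fix w hw]
  exact Pmap_apply w

lemma extAct_wedge (h : Matrix (Fin 5) (Fin 5) ℂ) (x y : Fin 5 → ℂ) :
    extAct h (wedge x y) = wedge (h.mulVec x) (h.mulVec y) := by
  simp [extAct, wedge, ExteriorAlgebra.map_apply_ι]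

lemma mulVec_eV (h : Matrix (Fin 5) (Fin 5) ℂ) (i : Fin 5) :
    h.mulVec (eV i) = fun j => h j i := by
  funext j
  simp [Matrix.mulVec, eV, dotProduct, Fin.sum_univ_five, Pi.single_apply]

lemma extAct_wedge_eV (h : Matrix (Fin 5) (Fin 5) ℂ) (i j : Fin 5) :
    extAct h (wedge (eV i) (eV j))
      = (h 0 i * h 1 j - h 1 i * h 0 j) • wedge (eV 0) (eV 1)
      + (h 0 i * h 2 j - h 2 i * h 0 j) • wedge (eV 0) (eV 2)
      + (h 0 i * h 3 j - h 3 i * h 0 j) • wedge (eV 0) (eV 3)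
      + (h 0 i * h 4 j - h 4 i * h 0 j) • wedge (eV 0) (eV 4)
      + (h 1 i * h 2 j - h 2 i * h 1 j) • wedge (eV 1) (eV 2)
      + (h 1 i * h 3 j - h 3 i * h 1 j) • wedge (eV 1) (eV 3)
      + (h 1 i * h 4 j - h 4 i * h 1 j) • wedge (eV 1) (eV 4)
      + (h 2 i * h 3 j - h 3 i * h 2 j) • wedge (eV 2) (eV 3)
      + (h 2 i * h 4 j - h 4 i * h 2 j) • wedge (eV 2) (eV 4)
      + (h 3 i * h 4 j - h 4 i * h 3 j) • wedge (eV 3) (eV 4) := by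
  rw [extAct_wedge, mulVec_eV, mulVec_eV, wedge_expand]

lemma extAct_g5_e01 : extAct g5 (wedge (eV 0) (eV 1)) = - wedge (eV 2) (eV 3) := by
  rw [extAct_wedge_eV]
  simp [g5, Matrix.vecHead, Matrix.vecTail]

lemma extAct_g5_e23 : extAct g5 (wedge (eV 2) (eV 3)) = wedge (eV 0) (eV 1) := by
  rw [extAct_wedge_eV]
  simp [g5, Matrix.vecHead, Matrix.vecTail]

lemma extAct_bd5_e01 (A B : Mat2) (c : ℂ) (hA : A.det = 1) :
    extAct (bd5 A B c) (wedge (eV 0) (eV 1)) = wedge (eV 0) (eV 1) := by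
  rw [extAct_wedge_eV]
  rw [Matrix.det_fin_two] at hA
  simp [bd5, Matrix.vecHead, Matrix.vecTail]
  rw [show A 0 0 * A 1 1 - A 1 0 * A 0 1 = 1 by linear_combination hA]
  module

lemma extAct_bd5_e23 (A B : Mat2) (c : ℂ) (hB : B.det = 1) :
    extAct (bd5 A B c) (wedge (eV 2) (eV 3)) = wedge (eV 2) (eV 3) := by
  rw [extAct_wedge_eV]
  rw [Matrix.det_fin_two] at hB
  simp [bd5, Matrix.vecHead, Matrix.vecTail]
  rw [show B 0 0 * B 1 1 - B 1 0 * B 0 1 = 1 by linear_combination hB]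
  module

/-! ### Specific group elements -/

def A0 : Mat2 := !![Complex.I, 0; 0, -Complex.I]

lemma A0_mem : A0 ∈ SU2 := by
  constructor
  · ext i j
    fin_cases i <;> fin_cases j <;>
      simp [A0, Matrix.mul_apply, Fin.sum_univ_two, Matrix.conjTranspose_apply, Matrix.one_apply,
        Complex.ext_iff]
  · simp [A0, Matrix.det_fin_two]

lemma one_mem_SU2 : (1 : Mat2) ∈ SU2 := by
  constructor <;> simp

lemma cancel_ne_one {a c : ℂ} (ha : a ≠ 1) (h : a * c = c) : c = 0 := by
  have h2 : (a - 1) * c = 0 := by ring_nf; linear_combination h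
  rcases mul_eq_zero.mp h2 with h3 | h3
  · exact absurd (by linear_combination h3) ha
  · exact h3

lemma wedge_mem2 (x y : Fin 5 → ℂ) : wedge x y ∈ ⋀[ℂ]^2 (Fin 5 → ℂ) := by
  rw [wedge_eq_iMulti]
  exact ExteriorAlgebra.ιMulti_range ℂ 2 ⟨![x, y], rfl⟩

lemma indep_pair : LinearIndependent ℂ ![wedge (eV 0) (eV 1), wedge (eV 2) (eV 3)] := by
  rw [LinearIndependent.pair_iff]
  intro s t hst
  have h1 := congrArg (phi 0 1) hst
  have h2 := congrArg (phi 2 3) hst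
  simp only [map_add, map_smul, phi_eV, map_zero] at h1 h2
  simp at h1 h2
  exact ⟨h1, h2⟩

theorem statement8 :
    ({w : EA | w ∈ ⋀[ℂ]^2 (Fin 5 → ℂ) ∧
        ∀ (A B : Mat2) (c : ℂ), A ∈ SU2 → B ∈ SU2 → ‖c‖ = 1 →
          extAct (bd5 A B c) w = w}
      = ↑(Submodule.span ℂ {wedge (eV 0) (eV 1), wedge (eV 2) (eV 3)})) ∧
    Module.finrank ℂ ↥(Submodule.span ℂ {wedge (eV 0) (eV 1), wedge (eV 2) (eV 3)}) = 2 ∧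
    extAct g5 (wedge (eV 0) (eV 1)) = -wedge (eV 2) (eV 3) ∧
    extAct g5 (wedge (eV 2) (eV 3)) = wedge (eV 0) (eV 1) ∧
    ({w : EA | w ∈ ⋀[ℂ]^2 (Fin 5 → ℂ) ∧
        (∀ (A B : Mat2) (c : ℂ), A ∈ SU2 → B ∈ SU2 → ‖c‖ = 1 →
          extAct (bd5 A B c) w = w) ∧ extAct g5 w = w}
      = {0}) := by
  have hImain : ∀ w : EA, w ∈ ⋀[ℂ]^2 (Fin 5 → ℂ) →
      (∀ (A B : Mat2) (c : ℂ), A ∈ SU2 → B ∈ SU2 → ‖c‖ = 1 →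
          extAct (bd5 A B c) w = w) →
      ∃ a b : ℂ, w = a • wedge (eV 0) (eV 1) + b • wedge (eV 2) (eV 3) := by
    intro w hw2 hfix
    obtain ⟨c01, hc01⟩ : ∃ c, phi 0 1 w = c := ⟨_, rfl⟩
    obtain ⟨c02, hc02⟩ : ∃ c, phi 0 2 w = c := ⟨_, rfl⟩
    obtain ⟨c03, hc03⟩ : ∃ c, phi 0 3 w = c := ⟨_, rfl⟩
    obtain ⟨c04, hc04⟩ : ∃ c, phi 0 4 w = c := ⟨_, rfl⟩
    obtain ⟨c12, hc12⟩ : ∃ c, phi 1 2 w = c := ⟨_, rfl⟩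
    obtain ⟨c13, hc13⟩ : ∃ c, phi 1 3 w = c := ⟨_, rfl⟩
    obtain ⟨c14, hc14⟩ : ∃ c, phi 1 4 w = c := ⟨_, rfl⟩
    obtain ⟨c23, hc23⟩ : ∃ c, phi 2 3 w = c := ⟨_, rfl⟩
    obtain ⟨c24, hc24⟩ : ∃ c, phi 2 4 w = c := ⟨_, rfl⟩
    obtain ⟨c34, hc34⟩ : ∃ c, phi 3 4 w = c := ⟨_, rfl⟩
    have hw : w = c01 • wedge (eV 0) (eV 1) + c02 • wedge (eV 0) (eV 2)
      + c03 • wedge (eV 0) (eV 3) + c04 • wedge (eV 0) (eV 4)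
      + c12 • wedge (eV 1) (eV 2) + c13 • wedge (eV 1) (eV 3)
      + c14 • wedge (eV 1) (eV 4) + c23 • wedge (eV 2) (eV 3)
      + c24 • wedge (eV 2) (eV 4) + c34 • wedge (eV 3) (eV 4) := by
      rw [← hc01, ← hc02, ← hc03, ← hc04, ← hc12, ← hc13, ← hc14, ← hc23, ← hc24, ← hc34]
      exact expand2 w hw2
    have habs1 : ‖(1 : ℂ)‖ = 1 := by simp
    have h1 := hfix A0 1 1 A0_mem one_mem_SU2 habs1
    have h2 := hfix 1 A0 1 one_mem_SU2 A0_mem habs1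
    rw [hw] at h1 h2
    simp only [map_add, map_smul, extAct_wedge_eV] at h1 h2
    simp only [bd5, A0, Matrix.one_apply] at h1 h2
    norm_num [Matrix.cons_val_zero, Matrix.cons_val_one, Matrix.head_cons,
      Matrix.vecHead, Matrix.vecTail] at h1 h2
    -- now extract coefficient equations
    have hIne : (Complex.I : ℂ) ≠ 1 := by simp [Complex.ext_iff]
    have hnIne : (-Complex.I : ℂ) ≠ 1 := by simp [Complex.ext_iff]
    have e02 := congrArg (phi 0 2) h1
    have e03 := congrArg (phi 0 3) h1
    have e04 := congrArg (phi 0 4) h1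
    have e12 := congrArg (phi 1 2) h1
    have e13 := congrArg (phi 1 3) h1
    have e14 := congrArg (phi 1 4) h1
    have e24 := congrArg (phi 2 4) h2
    have e34 := congrArg (phi 3 4) h2
    simp only [map_add, map_smul, map_neg, smul_smul, phi_eV] at e02 e03 e04 e12 e13 e14 e24 e34
    simp at e02 e03 e04 e12 e13 e14 e24 e34
    have z02 : c02 = 0 := by linear_combination e02 * (-(Complex.I+1)/2) + (c02/2) * Complex.I_sq
    have z03 : c03 = 0 := by linear_combination e03 * (-(Complex.I+1)/2) + (c03/2) * Complex.I_sq
    have z04 : c04 = 0 := by linear_combination e04 * (-(Complex.I+1)/2) + (c04/2) * Complex.I_sq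
    have z24 : c24 = 0 := by linear_combination e24 * (-(Complex.I+1)/2) + (c24/2) * Complex.I_sq
    have z12 : c12 = 0 := by linear_combination e12 * ((Complex.I-1)/2) + (c12/2) * Complex.I_sq
    have z13 : c13 = 0 := by linear_combination e13 * ((Complex.I-1)/2) + (c13/2) * Complex.I_sq
    have z14 : c14 = 0 := by linear_combination e14 * ((Complex.I-1)/2) + (c14/2) * Complex.I_sq
    have z34 : c34 = 0 := by linear_combination e34 * ((Complex.I-1)/2) + (c34/2) * Complex.I_sq
    refine ⟨c01, c23, ?_⟩
    rw [hw, z02, z03, z04, z12, z13, z14, z24, z34]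
    module
  have hspan : ∀ w : EA,
      w ∈ Submodule.span ℂ {wedge (eV 0) (eV 1), wedge (eV 2) (eV 3)} ↔
      ∃ a b : ℂ, a • wedge (eV 0) (eV 1) + b • wedge (eV 2) (eV 3) = w :=
    fun w => Submodule.mem_span_pair
  have hmain : {w : EA | w ∈ ⋀[ℂ]^2 (Fin 5 → ℂ) ∧
        ∀ (A B : Mat2) (c : ℂ), A ∈ SU2 → B ∈ SU2 → ‖c‖ = 1 →
          extAct (bd5 A B c) w = w}
      = ↑(Submodule.span ℂ {wedge (eV 0) (eV 1), wedge (eV 2) (eV 3)}) := by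
    ext w
    simp only [Set.mem_setOf_eq, SetLike.mem_coe, hspan]
    constructor
    · rintro ⟨hw2, hfix⟩
      obtain ⟨a, b, hab⟩ := hImain w hw2 hfix
      exact ⟨a, b, hab.symm⟩
    · rintro ⟨a, b, rfl⟩
      constructor
      · exact Submodule.add_mem _ (Submodule.smul_mem _ _ (wedge_mem2 _ _))
          (Submodule.smul_mem _ _ (wedge_mem2 _ _))
      · intro A B c hA hB hc
        rw [map_add, map_smul, map_smul, extAct_bd5_e01 A B c hA.2,
          extAct_bd5_e23 A B c hB.2]
  refine ⟨hmain, ?_, extAct_g5_e01, extAct_g5_e23, ?_⟩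
  · have hrange : ({wedge (eV 0) (eV 1), wedge (eV 2) (eV 3)} : Set EA)
        = Set.range ![wedge (eV 0) (eV 1), wedge (eV 2) (eV 3)] := by
      ext x
      simp [Fin.exists_fin_two]
      tauto
    rw [hrange, finrank_span_eq_card indep_pair]
    simp
  · ext w
    simp only [Set.mem_setOf_eq, Set.mem_singleton_iff]
    constructor
    · rintro ⟨hw2, hfix, hg⟩
      have hmem : w ∈ (↑(Submodule.span ℂ {wedge (eV 0) (eV 1), wedge (eV 2) (eV 3)}) : Set EA) := by
        rw [← hmain]; exact ⟨hw2, hfix⟩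
      obtain ⟨a, b, hab⟩ := (hspan w).mp hmem
      rw [← hab] at hg
      rw [map_add, map_smul, map_smul, extAct_g5_e01, extAct_g5_e23] at hg
      have eq1 := congrArg (phi 0 1) hg
      have eq2 := congrArg (phi 2 3) hg
      simp only [map_add, map_smul, map_neg, phi_eV] at eq1 eq2
      simp at eq1 eq2
      have ha : a = 0 := by linear_combination -(eq1 + eq2) / 2
      have hb : b = 0 := by linear_combination (eq1 - eq2) / 2
      rw [← hab, ha, hb]
      simp
    · rintro rfl
      exact ⟨Submodule.zero_mem _, fun A B c _ _ _ => map_zero _, map_zero _⟩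

end
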